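/- arXiv:1202.2643 — 4 statements merged into one kernel-verified Lean document; each statement's English description precedes it below -/
import Mathlib

section
/- Let q be a nonzero rational number with q ≠ -1. With G̃_{n,q}(x) the q-Genocchi polynomials with weight zero defined by ∑_{n≥0} G̃_{n,q}(x) tⁿ/n! = (1+q)t·e^{xt}/(q eᵗ+1), the symmetry G̃_{n,q⁻¹}(1-x) = (-1)^{n+1}·G̃_{n,q}(x) holds for all n ≥ 0. -/
open PowerSeries

/-- symmetry G̃_{n,q⁻¹}(1-x) = (-1)^(n+1)·G̃_{n,q}(x). -/
private lemma rescaleC (a r : ℚ) : PowerSeries.rescale a (PowerSeries.C r) = PowerSeries.C r := by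
  ext n
  by_cases h : n = 0 <;> simp [PowerSeries.coeff_rescale, PowerSeries.coeff_C, h]

/-- symmetry G̃_{n,q⁻¹}(1-x) = (-1)^{n+1}·G̃_{n,q}(x). -/
theorem qGenocchi_symmetry (q : ℚ) (hq1 : q ≠ -1) (hq0 : q ≠ 0)
    (G G' : ℕ → ℚ → ℚ)
    (hG : ∀ x : ℚ, (PowerSeries.mk fun n => G n x / n.factorial) *
        (PowerSeries.C q * PowerSeries.exp ℚ + 1) =
        PowerSeries.C (1 + q) * PowerSeries.X * PowerSeries.rescale x (PowerSeries.exp ℚ))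
    (hG' : ∀ x : ℚ, (PowerSeries.mk fun n => G' n x / n.factorial) *
        (PowerSeries.C q⁻¹ * PowerSeries.exp ℚ + 1) =
        PowerSeries.C (1 + q⁻¹) * PowerSeries.X * PowerSeries.rescale x (PowerSeries.exp ℚ)) :
    ∀ (n : ℕ) (x : ℚ), G' n (1 - x) = (-1 : ℚ) ^ (n + 1) * G n x := by
  intro n x
  -- H := -(rescale (-1) (F x)) satisfies the G' functional equation at 1 - x
  set F : ℚ⟦X⟧ := PowerSeries.mk fun n => G n x / n.factorial with hF
  set H : ℚ⟦X⟧ := -(PowerSeries.rescale (-1 : ℚ) F) with hH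
  have hq1' : (1 : ℚ) + q ≠ 0 := by
    intro h; apply hq1; linarith
  have hq1inv : (1 : ℚ) + q⁻¹ ≠ 0 := by
    intro h
    apply hq1'
    field_simp at h
    linarith
  have key : H * (PowerSeries.C q⁻¹ * PowerSeries.exp ℚ + 1) =
      PowerSeries.C (1 + q⁻¹) * PowerSeries.X *
        PowerSeries.rescale (1 - x) (PowerSeries.exp ℚ) := by
    have h1 := congrArg (PowerSeries.rescale (-1 : ℚ)) (hG x)
    rw [map_mul, map_add, map_mul, map_one, map_mul, map_mul] at h1
    rw [rescaleC, rescaleC, PowerSeries.rescale_neg_one_X,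
      PowerSeries.rescale_rescale] at h1
    -- h1 : rescale (-1) F * (C q * rescale (-1) exp + 1) = C (1+q) * (-X) * rescale (-x) exp
    have h2 := congrArg (fun A => A * (PowerSeries.C q⁻¹ * PowerSeries.exp ℚ)) h1
    have hexp : PowerSeries.rescale (-1 : ℚ) (PowerSeries.exp ℚ) * PowerSeries.exp ℚ = 1 := by
      have := PowerSeries.exp_mul_exp_eq_exp_add (-1 : ℚ) (1 : ℚ)
      simpa [PowerSeries.rescale_one] using this
    have hexp2 : PowerSeries.rescale (x * -1 : ℚ) (PowerSeries.exp ℚ) * PowerSeries.exp ℚ =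
        PowerSeries.rescale (1 - x) (PowerSeries.exp ℚ) := by
      have h := PowerSeries.exp_mul_exp_eq_exp_add (x * -1 : ℚ) (1 : ℚ)
      rw [PowerSeries.rescale_one, RingHom.id_apply] at h
      rw [h]
      congr 1
      ring
    calc H * (PowerSeries.C q⁻¹ * PowerSeries.exp ℚ + 1)
        = -(PowerSeries.rescale (-1 : ℚ) F *
            ((PowerSeries.C q * PowerSeries.rescale (-1 : ℚ) (PowerSeries.exp ℚ) + 1) *
              (PowerSeries.C q⁻¹ * PowerSeries.exp ℚ))) := by
          rw [hH]
          have : (PowerSeries.C q * PowerSeries.rescale (-1 : ℚ) (PowerSeries.exp ℚ) + 1) *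
              (PowerSeries.C q⁻¹ * PowerSeries.exp ℚ) =
              PowerSeries.C q⁻¹ * PowerSeries.exp ℚ + 1 := by
            have hc : PowerSeries.C q * PowerSeries.C q⁻¹ = 1 := by
              rw [← map_mul]; rw [mul_inv_cancel₀ hq0]; simp
            calc (PowerSeries.C q * PowerSeries.rescale (-1 : ℚ) (PowerSeries.exp ℚ) + 1) *
                (PowerSeries.C q⁻¹ * PowerSeries.exp ℚ)
                = (PowerSeries.C q * PowerSeries.C q⁻¹) *
                    (PowerSeries.rescale (-1 : ℚ) (PowerSeries.exp ℚ) * PowerSeries.exp ℚ) +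
                    PowerSeries.C q⁻¹ * PowerSeries.exp ℚ := by ring
              _ = PowerSeries.C q⁻¹ * PowerSeries.exp ℚ + 1 := by
                  rw [hc, hexp]; ring
          rw [← this]; ring
      _ = -(PowerSeries.C (1 + q) * -PowerSeries.X *
            PowerSeries.rescale (x * -1) (PowerSeries.exp ℚ) *
            (PowerSeries.C q⁻¹ * PowerSeries.exp ℚ)) := by
          rw [← mul_assoc, h2]
      _ = PowerSeries.C (1 + q⁻¹) * PowerSeries.X *
            PowerSeries.rescale (1 - x) (PowerSeries.exp ℚ) := by
          have hc2 : PowerSeries.C (1 + q) * PowerSeries.C q⁻¹ =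
              PowerSeries.C (1 + q⁻¹) := by
            rw [← map_mul]
            congr 1
            field_simp
            ring
          calc -(PowerSeries.C (1 + q) * -PowerSeries.X *
                PowerSeries.rescale (x * -1) (PowerSeries.exp ℚ) *
                (PowerSeries.C q⁻¹ * PowerSeries.exp ℚ))
              = (PowerSeries.C (1 + q) * PowerSeries.C q⁻¹) * PowerSeries.X *
                (PowerSeries.rescale (x * -1) (PowerSeries.exp ℚ) * PowerSeries.exp ℚ) := by
                  ring
            _ = _ := by rw [hc2, hexp2]
  -- uniqueness: cancel the unit
  have hne : (PowerSeries.C q⁻¹ * PowerSeries.exp ℚ + 1 : ℚ⟦X⟧) ≠ 0 := by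
    intro h
    have := congrArg (PowerSeries.constantCoeff) h
    simp [PowerSeries.constantCoeff_exp] at this
    apply hq1inv; linarith
  have heq : (PowerSeries.mk fun n => G' n (1 - x) / n.factorial) = H := by
    have := (hG' (1 - x)).trans key.symm
    exact mul_right_cancel₀ hne this
  have hcoeff := congrArg (PowerSeries.coeff n) heq
  rw [PowerSeries.coeff_mk, hH, map_neg, PowerSeries.coeff_rescale,
    hF, PowerSeries.coeff_mk] at hcoeff
  have hfac : (n.factorial : ℚ) ≠ 0 := Nat.cast_ne_zero.mpr n.factorial_ne_zero
  field_simp at hcoeff ⊢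
  rw [hcoeff]; ring
end

section
/- Let q be a nonzero rational number with q ≠ -1, and let G̃_{n,q}(x) be the q-Genocchi polynomials with weight zero, with G̃_{n,q} = G̃_{n,q}(0). Then for every n > 1, q²·G̃_{n+1,q}(2) = (n+1)·q·(1+q) + G̃_{n+1,q}. -/
open PowerSeries

/-- q²·G̃_{n+1,q}(2) = (n+1)·q·(1+q) + G̃_{n+1,q} for n > 1. -/
theorem qGenocchi_at_two (q : ℚ) (hq1 : q ≠ -1) (hq0 : q ≠ 0)
    (G : ℕ → ℚ → ℚ)
    (hG : ∀ x : ℚ, (PowerSeries.mk fun n => G n x / n.factorial) *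
        (PowerSeries.C q * PowerSeries.exp ℚ + 1) =
        PowerSeries.C (1 + q) * PowerSeries.X * PowerSeries.rescale x (PowerSeries.exp ℚ)) :
    ∀ n : ℕ, 1 < n → q ^ 2 * G (n + 1) 2 = (n + 1 : ℚ) * q * (1 + q) + G (n + 1) 0 := by
  -- unit
  have hu : (PowerSeries.C q * PowerSeries.exp ℚ + 1) ≠ 0 := by
    intro h
    have := congrArg (PowerSeries.constantCoeff) h
    simp [constantCoeff_exp] at this
    exact hq1 (by linarith)
  have key : ∀ (x : ℚ) (n : ℕ),
      q * G (n+1) (x+1) + G (n+1) x = (1+q) * (n+1) * x^n := by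
    intro x n
    have hser : PowerSeries.C q * (PowerSeries.mk fun n => G n (x+1) / n.factorial) +
        (PowerSeries.mk fun n => G n x / n.factorial) =
        PowerSeries.C (1 + q) * PowerSeries.X * PowerSeries.rescale x (PowerSeries.exp ℚ) := by
      apply mul_right_cancel₀ hu
      rw [add_mul, mul_assoc, hG (x+1), hG x]
      rw [← exp_mul_exp_eq_exp_add x 1, rescale_one]
      simp only [RingHom.id_apply]
      ring
    have hc := congrArg (PowerSeries.coeff (n+1)) hser
    have hrhs : (PowerSeries.coeff (n+1)) (PowerSeries.C (1 + q) * PowerSeries.X *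
        PowerSeries.rescale x (PowerSeries.exp ℚ)) = (1+q) * (x^n / n.factorial) := by
      rw [show PowerSeries.C (1 + q) * PowerSeries.X * PowerSeries.rescale x (PowerSeries.exp ℚ)
          = PowerSeries.X * (PowerSeries.C (1 + q) * PowerSeries.rescale x (PowerSeries.exp ℚ)) by ring,
        coeff_succ_X_mul, coeff_C_mul, coeff_rescale, coeff_exp]
      simp [div_eq_mul_inv]
    rw [hrhs] at hc
    simp only [map_add, coeff_C_mul, coeff_mk] at hc
    have hfac : ((n+1).factorial : ℚ) ≠ 0 := by exact_mod_cast (Nat.factorial_pos (n+1)).ne'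
    have hfac' : ((n).factorial : ℚ) ≠ 0 := by exact_mod_cast (Nat.factorial_pos n).ne'
    rw [Nat.factorial_succ] at hc
    push_cast at hc
    field_simp at hc
    apply mul_right_cancel₀ hfac'
    rw [hc]; ring
  intro n hn
  have h1 := key 1 n
  have h0 := key 0 n
  rw [zero_pow (by omega : n ≠ 0)] at h0
  norm_num at h1 h0
  linear_combination q * h1 - h0
end

section
/- Let q be a nonzero rational number with q ≠ -1 and let G̃_{n,q} denote the q-Genocchi numbers with weight zero. Define the moments M_n := G̃_{n+1,q}/(n+1) and the reflected moments N_n := (1+q) + q²·G̃_{n+1,q⁻¹}/(n+1) for n ≥ 1, with N_0 := 1 (i.e., N_n represents the value of the alternating binomial transform of the M-sequence at 1-ξ). Then for all n ≥ 1, N_n = ∑_{j=0}^{n} C(n,j)·(-1)^j·M_j, where M_0 = G̃_{1,q} and the identity N_n = (1+q) + q²·G̃_{n+1,q⁻¹}/(n+1) holds. -/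
open PowerSeries Finset

private lemma alt_choose_orth (m i : ℕ) (hi : i ≤ m) :
    ∑ j ∈ Finset.range (m + 1), (-1 : ℚ) ^ j * (m.choose j) * (j.choose i) =
      if i = m then (-1 : ℚ) ^ m else 0 := by
  have hsplit : m + 1 = i + (m - i + 1) := by omega
  rw [hsplit, Finset.sum_range_add]
  have h1 : ∑ j ∈ Finset.range i, (-1 : ℚ) ^ j * (m.choose j) * (j.choose i) = 0 := by
    apply Finset.sum_eq_zero
    intro j hj
    simp [Nat.choose_eq_zero_of_lt (Finset.mem_range.mp hj)]
  rw [h1, zero_add]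
  have h2 : ∀ k ∈ Finset.range (m - i + 1),
      (-1 : ℚ) ^ (i + k) * (m.choose (i + k)) * ((i + k).choose i)
        = (-1 : ℚ) ^ i * (m.choose i) * ((-1 : ℚ) ^ k * ((m - i).choose k)) := by
    intro k hk
    have hk' : k ≤ m - i := by simpa using Nat.lt_succ_iff.mp (Finset.mem_range.mp hk)
    have := Nat.choose_mul (n := m) (Nat.le_add_right i k)
    rw [Nat.add_sub_cancel_left] at this
    have hc : ((m.choose (i + k) : ℚ)) * ((i + k).choose i)
        = (m.choose i) * ((m - i).choose k) := by
      exact_mod_cast congrArg (Nat.cast : ℕ → ℚ) this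
    rw [pow_add]
    calc (-1:ℚ)^i * (-1)^k * (m.choose (i+k)) * ((i+k).choose i)
        = (-1:ℚ)^i * (-1)^k * ((m.choose (i+k) : ℚ) * ((i + k).choose i)) := by ring
      _ = (-1:ℚ)^i * (-1)^k * ((m.choose i : ℚ) * ((m-i).choose k)) := by rw [hc]
      _ = (-1:ℚ)^i * (m.choose i) * ((-1:ℚ)^k * ((m-i).choose k)) := by ring
  rw [Finset.sum_congr rfl h2, ← Finset.mul_sum]
  have h3 : ∑ k ∈ Finset.range (m - i + 1), (-1 : ℚ) ^ k * ((m - i).choose k) =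
      if m - i = 0 then 1 else 0 := by
    have := Int.alternating_sum_range_choose (n := m - i)
    exact_mod_cast congrArg (Int.cast : ℤ → ℚ) this
  rw [h3]
  rcases eq_or_ne i m with rfl | hne
  · simp
  · have : m - i ≠ 0 := by omega
    simp [this, hne]

private lemma orth (m : ℕ) (f : ℕ → ℚ) :
    ∑ j ∈ Finset.range (m + 1), (-1 : ℚ) ^ j * (m.choose j) *
      ∑ i ∈ Finset.range (j + 1), (j.choose i : ℚ) * f i = (-1 : ℚ) ^ m * f m := by
  have hext : ∀ j ∈ Finset.range (m + 1),
      (-1 : ℚ) ^ j * (m.choose j) * ∑ i ∈ Finset.range (j + 1), (j.choose i : ℚ) * f i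
      = ∑ i ∈ Finset.range (m + 1), (-1 : ℚ) ^ j * (m.choose j) * ((j.choose i : ℚ) * f i) := by
    intro j hj
    rw [← Finset.mul_sum]
    congr 1
    apply Finset.sum_subset
    · intro x hx
      simp only [Finset.mem_range] at *
      omega
    · intro x _ hx
      simp only [Finset.mem_range, not_lt] at hx
      have : j < x := by omega
      simp [Nat.choose_eq_zero_of_lt this]
  rw [Finset.sum_congr rfl hext, Finset.sum_comm]
  have h4 : ∀ i ∈ Finset.range (m + 1),
      ∑ j ∈ Finset.range (m + 1), (-1 : ℚ) ^ j * (m.choose j) * ((j.choose i : ℚ) * f i)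
      = (if i = m then (-1 : ℚ) ^ m else 0) * f i := by
    intro i hi
    have hi' : i ≤ m := Nat.lt_succ_iff.mp (Finset.mem_range.mp hi)
    rw [← alt_choose_orth m i hi', Finset.sum_mul]
    exact Finset.sum_congr rfl fun j _ => by ring
  rw [Finset.sum_congr rfl h4]
  have h5 : ∀ x ∈ Finset.range (m+1), (if x = m then (-1:ℚ) ^ m else 0) * f x
      = if x = m then (-1:ℚ)^m * f x else 0 := by
    intro x _; split <;> simp
  rw [Finset.sum_congr rfl h5, Finset.sum_ite_eq' (Finset.range (m+1)) m
    (fun i => (-1:ℚ)^m * f i)]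
  simp

private lemma rec_of_ps (c : ℚ) (f : ℕ → ℚ)
    (h : (PowerSeries.mk fun n => f n / n.factorial) * (PowerSeries.C (R := ℚ) c * PowerSeries.exp ℚ + 1)
      = PowerSeries.C (R := ℚ) (1 + c) * PowerSeries.X) (m : ℕ) :
    f m + c * ∑ i ∈ Finset.range (m + 1), (m.choose i : ℚ) * f i
      = (1 + c) * (if m = 1 then 1 else 0) := by
  have h' := congrArg (PowerSeries.coeff (R := ℚ) m) h
  rw [PowerSeries.coeff_mul] at h'
  rw [show (PowerSeries.coeff (R := ℚ) m) (PowerSeries.C (R := ℚ) (1 + c) * PowerSeries.X)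
      = (1 + c) * (if m = 1 then 1 else 0) by
    rw [PowerSeries.coeff_C_mul, PowerSeries.coeff_X]] at h'
  simp only [map_add, PowerSeries.coeff_C_mul, PowerSeries.coeff_exp, PowerSeries.coeff_one,
    PowerSeries.coeff_mk, Algebra.algebraMap_self, RingHom.id_apply] at h'
  rw [Finset.Nat.sum_antidiagonal_eq_sum_range_succ_mk] at h'
  have hm : (m.factorial : ℚ) ≠ 0 := by exact_mod_cast Nat.factorial_ne_zero m
  have step : ∀ i ∈ Finset.range (m + 1),
      f i / i.factorial * (c * (1 / (m - i).factorial) + if m - i = 0 then 1 else 0)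
      = c * ((m.choose i : ℚ) * f i) / m.factorial
        + (if i = m then f m / m.factorial else 0) := by
    intro i hi
    have hi' : i ≤ m := Nat.lt_succ_iff.mp (Finset.mem_range.mp hi)
    have hfact : ((m.choose i : ℚ)) * (i.factorial) * ((m - i).factorial) = m.factorial := by
      exact_mod_cast congrArg (Nat.cast : ℕ → ℚ) (Nat.choose_mul_factorial_mul_factorial hi')
    have hif : (i.factorial : ℚ) ≠ 0 := by exact_mod_cast Nat.factorial_ne_zero i
    have hmif : ((m - i).factorial : ℚ) ≠ 0 := by exact_mod_cast Nat.factorial_ne_zero (m - i)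
    rcases eq_or_ne i m with rfl | hne
    · have h0 : i - i = 0 := by omega
      rw [h0]
      simp only [if_pos rfl, Nat.sub_self, ↓reduceIte]
      have h1 : (i.choose i : ℚ) = 1 := by simp
      rw [h1]
      field_simp
      ring
    · have h1 : m - i ≠ 0 := by omega
      rw [if_neg h1, if_neg hne]
      field_simp
      linear_combination (-(c * f i)) * hfact
  rw [Finset.sum_congr rfl step, Finset.sum_add_distrib] at h'
  rw [Finset.sum_ite_eq' (Finset.range (m+1)) m (fun _ => f m / m.factorial)] at h'
  simp only [Finset.mem_range, Nat.lt_succ_iff, le_refl, if_pos] at h'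
  have h'' : (∑ i ∈ Finset.range (m+1), c * ((m.choose i : ℚ) * f i)) / m.factorial
      + f m / m.factorial = (1 + c) * (if m = 1 then 1 else 0) := by
    rw [Finset.sum_div]
    convert h' using 2
  have hsum : (∑ i ∈ Finset.range (m+1), c * ((m.choose i : ℚ) * f i))
      = c * ∑ i ∈ Finset.range (m+1), (m.choose i : ℚ) * f i := by
    rw [Finset.mul_sum]
  rw [hsum] at h''
  have h3 := congrArg (· * (m.factorial : ℚ)) h''
  rw [add_mul, div_mul_cancel₀ _ hm, div_mul_cancel₀ _ hm] at h3
  rcases eq_or_ne m 1 with rfl | hne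
  · simp only [if_pos rfl] at h3 ⊢
    rw [show ((Nat.factorial 1 : ℚ)) = 1 by norm_num, mul_one] at h3
    linarith
  · simp only [if_neg hne] at h3 ⊢
    rw [mul_zero, zero_mul] at h3
    linarith

private lemma rec_unique (c : ℚ) (hc : 1 + c ≠ 0) (f h : ℕ → ℚ)
    (hf : ∀ m, f m + c * ∑ i ∈ Finset.range (m + 1), (m.choose i : ℚ) * f i
      = (1 + c) * (if m = 1 then 1 else 0))
    (hh : ∀ m, h m + c * ∑ i ∈ Finset.range (m + 1), (m.choose i : ℚ) * h i
      = (1 + c) * (if m = 1 then 1 else 0)) :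
    ∀ m, f m = h m := by
  intro m
  induction m using Nat.strong_induction_on with
  | _ m ih =>
    have h1 := hf m
    have h2 := hh m
    rw [Finset.sum_range_succ] at h1 h2
    simp only [Nat.choose_self, Nat.cast_one, one_mul] at h1 h2
    have hs : ∑ i ∈ Finset.range m, (m.choose i : ℚ) * f i
        = ∑ i ∈ Finset.range m, (m.choose i : ℚ) * h i :=
      Finset.sum_congr rfl fun i hi => by rw [ih i (Finset.mem_range.mp hi)]
    rw [hs] at h1
    have : (1 + c) * f m = (1 + c) * h m := by linear_combination h1 - h2
    exact mul_left_cancel₀ hc this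

private lemma refl_rec (q : ℚ) (hq0 : q ≠ 0) (g : ℕ → ℚ)
    (hg : ∀ m, g m + q * ∑ i ∈ Finset.range (m + 1), (m.choose i : ℚ) * g i
      = (1 + q) * (if m = 1 then 1 else 0)) :
    ∀ m, ((-1 : ℚ) ^ (m + 1) * ∑ j ∈ Finset.range (m + 1), (m.choose j : ℚ) * g j)
      + q⁻¹ * ∑ i ∈ Finset.range (m + 1), (m.choose i : ℚ) *
          ((-1 : ℚ) ^ (i + 1) * ∑ j ∈ Finset.range (i + 1), (i.choose j : ℚ) * g j)
      = (1 + q⁻¹) * (if m = 1 then 1 else 0) := by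
  intro m
  have hB := orth m g
  have hBeq : ∑ i ∈ Finset.range (m + 1), (m.choose i : ℚ) *
      ((-1 : ℚ) ^ (i + 1) * ∑ j ∈ Finset.range (i + 1), (i.choose j : ℚ) * g j)
      = -((-1 : ℚ) ^ m * g m) := by
    rw [← hB, ← Finset.sum_neg_distrib]
    apply Finset.sum_congr rfl
    intro i _
    rw [pow_succ]
    ring
  rw [hBeq]
  apply mul_left_cancel₀ hq0
  have hA : q * ∑ j ∈ Finset.range (m + 1), (m.choose j : ℚ) * g j
      = (1 + q) * (if m = 1 then 1 else 0) - g m := by linarith [hg m]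
  calc q * ((-1 : ℚ) ^ (m + 1) * ∑ j ∈ Finset.range (m + 1), (m.choose j : ℚ) * g j
        + q⁻¹ * -((-1 : ℚ) ^ m * g m))
      = (-1 : ℚ) ^ (m + 1) * (q * ∑ j ∈ Finset.range (m + 1), (m.choose j : ℚ) * g j)
        - (q * q⁻¹) * ((-1 : ℚ) ^ m * g m) := by ring
    _ = (-1 : ℚ) ^ (m + 1) * ((1 + q) * (if m = 1 then 1 else 0) - g m)
        - 1 * ((-1 : ℚ) ^ m * g m) := by rw [hA, mul_inv_cancel₀ hq0]
    _ = (-1 : ℚ) ^ (m + 1) * ((1 + q) * (if m = 1 then 1 else 0)) := by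
        rw [pow_succ]; ring
    _ = q * ((1 + q⁻¹) * (if m = 1 then 1 else 0)) := by
        rcases eq_or_ne m 1 with rfl | hne
        · norm_num
          field_simp
          ring
        · simp [hne]

/-- ∑_{j=0}^{n} C(n,j)(-1)^j G̃_{j+1,q}/(j+1) = (1+q) + q²·G̃_{n+1,q⁻¹}/(n+1)
for n ≥ 1. -/
theorem qGenocchi_reflected_moments (q : ℚ) (hq1 : q ≠ -1) (hq0 : q ≠ 0)
    (g g' : ℕ → ℚ)
    (hg : (PowerSeries.mk fun n => g n / n.factorial) *
        (PowerSeries.C (R := ℚ) q * PowerSeries.exp ℚ + 1) =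
        PowerSeries.C (R := ℚ) (1 + q) * PowerSeries.X)
    (hg' : (PowerSeries.mk fun n => g' n / n.factorial) *
        (PowerSeries.C (R := ℚ) q⁻¹ * PowerSeries.exp ℚ + 1) =
        PowerSeries.C (R := ℚ) (1 + q⁻¹) * PowerSeries.X) :
    ∀ n : ℕ, 1 ≤ n →
      (∑ j ∈ Finset.range (n + 1), (n.choose j : ℚ) * (-1) ^ j * (g (j + 1) / (j + 1))) =
        (1 + q) + q ^ 2 * (g' (n + 1) / (n + 1)) := by
  have hq1' : (1 : ℚ) + q ≠ 0 := fun h => hq1 (by linarith)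
  have recg := rec_of_ps q g hg
  have recg' := rec_of_ps q⁻¹ g' hg'
  have hqi : (1 : ℚ) + q⁻¹ ≠ 0 := by
    have h1 : (1 : ℚ) + q⁻¹ = (q + 1) / q := by field_simp
    rw [h1]
    exact div_ne_zero (fun h => hq1' (by linarith)) hq0
  have hg'eq : ∀ m, g' m = (-1 : ℚ) ^ (m + 1) *
      ∑ j ∈ Finset.range (m + 1), (m.choose j : ℚ) * g j :=
    rec_unique q⁻¹ hqi g'
      (fun m => (-1 : ℚ) ^ (m + 1) * ∑ j ∈ Finset.range (m + 1), (m.choose j : ℚ) * g j)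
      recg' (refl_rec q hq0 g recg)
  have hg0 : g 0 = 0 := by
    have h0 := recg 0
    simp only [zero_add, Finset.range_one, Finset.sum_singleton, Nat.choose_self, Nat.cast_one,
      one_mul, if_neg (by norm_num : (0 : ℕ) ≠ 1), mul_zero] at h0
    have : (1 + q) * g 0 = 0 := by linear_combination h0
    exact (mul_eq_zero.mp this).resolve_left hq1'
  have key1 : ∀ m, m ≠ 1 → q * g' m = (-1 : ℚ) ^ m * g m := by
    intro m hm
    have h1 := recg m
    rw [if_neg hm, mul_zero] at h1
    have h2 : q * ∑ j ∈ Finset.range (m + 1), (m.choose j : ℚ) * g j = -g m := by linarith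
    rw [hg'eq m]
    calc q * ((-1 : ℚ) ^ (m + 1) * ∑ j ∈ Finset.range (m + 1), (m.choose j : ℚ) * g j)
        = (-1 : ℚ) ^ (m + 1) * (q * ∑ j ∈ Finset.range (m + 1), (m.choose j : ℚ) * g j) := by
          ring
      _ = (-1 : ℚ) ^ (m + 1) * (-g m) := by rw [h2]
      _ = (-1 : ℚ) ^ m * g m := by rw [pow_succ]; ring
  have recM : ∀ k, q * ∑ i ∈ Finset.range (k + 1), (k.choose i : ℚ) * (g (i + 1) / (i + 1))
      + g (k + 1) / (k + 1) = (1 + q) * (if k = 0 then 1 else 0) := by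
    intro k
    have h1 := recg (k + 1)
    rw [Finset.sum_range_succ'] at h1
    rw [hg0, mul_zero, add_zero] at h1
    have hterm : ∀ i ∈ Finset.range (k + 1), (((k + 1).choose (i + 1) : ℚ)) * g (i + 1)
        = ((k : ℚ) + 1) * ((k.choose i : ℚ) * (g (i + 1) / (i + 1))) := by
      intro i _
      have hc : ((k : ℚ) + 1) * (k.choose i) = ((k + 1).choose (i + 1)) * ((i : ℚ) + 1) := by
        exact_mod_cast congrArg (Nat.cast : ℕ → ℚ) (Nat.add_one_mul_choose_eq k i)
      have hi1 : ((i : ℚ) + 1) ≠ 0 := by positivity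
      field_simp
      linear_combination (-(g (i + 1))) * hc
    rw [Finset.sum_congr rfl hterm, ← Finset.mul_sum] at h1
    have hif : (if k + 1 = 1 then (1 : ℚ) else 0) = (if k = 0 then 1 else 0) := by
      rcases eq_or_ne k 0 with rfl | h
      · simp
      · simp [h]
    rw [hif] at h1
    have hk1 : ((k : ℚ) + 1) ≠ 0 := by positivity
    rcases eq_or_ne k 0 with rfl | hk
    · simp only [if_pos rfl, mul_one] at h1 ⊢
      push_cast at h1 ⊢
      linarith
    · rw [if_neg hk, mul_zero] at h1 ⊢
      have := h1
      field_simp at this ⊢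
      linarith
  intro n hn
  have hkey := key1 (n + 1) (by omega)
  have main : ∑ j ∈ Finset.range (n + 1), (-1 : ℚ) ^ j * (n.choose j) *
      ((q * ∑ i ∈ Finset.range (j + 1), (j.choose i : ℚ) * (g (i + 1) / (i + 1)))
        + g (j + 1) / (j + 1)) = (1 + q) := by
    have hterm0 : ∀ j ∈ Finset.range (n + 1), (-1 : ℚ) ^ j * (n.choose j) *
        ((1 + q) * if j = 0 then 1 else 0) = if j = 0 then (1 + q) else 0 := by
      intro j _
      rcases eq_or_ne j 0 with rfl | h
      · simp
      · simp [h]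
    rw [Finset.sum_congr rfl (fun j _ => by rw [recM j]),
      Finset.sum_congr rfl hterm0,
      Finset.sum_ite_eq' (Finset.range (n + 1)) 0 (fun _ => (1 + q))]
    simp
  have horth := orth n (fun i => g (i + 1) / ((i : ℚ) + 1))
  have hsplit : ∑ j ∈ Finset.range (n + 1), (-1 : ℚ) ^ j * (n.choose j) *
      ((q * ∑ i ∈ Finset.range (j + 1), (j.choose i : ℚ) * (g (i + 1) / (i + 1)))
        + g (j + 1) / (j + 1))
      = q * ((-1 : ℚ) ^ n * (g (n + 1) / ((n : ℚ) + 1)))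
        + ∑ j ∈ Finset.range (n + 1), (-1 : ℚ) ^ j * (n.choose j) * (g (j + 1) / (j + 1)) := by
    rw [show ∀ (x : ℚ), q * ((-1:ℚ)^n * x) = q * ((-1:ℚ)^n * x) from fun _ => rfl]
    have expand : ∀ j ∈ Finset.range (n + 1), (-1 : ℚ) ^ j * (n.choose j) *
        ((q * ∑ i ∈ Finset.range (j + 1), (j.choose i : ℚ) * (g (i + 1) / (i + 1)))
          + g (j + 1) / (j + 1))
        = q * ((-1 : ℚ) ^ j * (n.choose j) *
            ∑ i ∈ Finset.range (j + 1), (j.choose i : ℚ) * (g (i + 1) / (i + 1)))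
          + (-1 : ℚ) ^ j * (n.choose j) * (g (j + 1) / (j + 1)) := by
      intro j _
      ring
    rw [Finset.sum_congr rfl expand, Finset.sum_add_distrib, ← Finset.mul_sum, horth]
  rw [hsplit] at main
  have hS : ∑ j ∈ Finset.range (n + 1), (n.choose j : ℚ) * (-1) ^ j * (g (j + 1) / (j + 1))
      = ∑ j ∈ Finset.range (n + 1), (-1 : ℚ) ^ j * (n.choose j) * (g (j + 1) / (j + 1)) :=
    Finset.sum_congr rfl fun j _ => by ring
  rw [hS]
  have hrhs : q ^ 2 * (g' (n + 1) / ((n : ℚ) + 1))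
      = -(q * ((-1 : ℚ) ^ n * (g (n + 1) / ((n : ℚ) + 1)))) := by
    have hn1 : ((n : ℚ) + 1) ≠ 0 := by positivity
    have : q ^ 2 * (g' (n + 1) / ((n : ℚ) + 1)) = q * ((q * g' (n + 1)) / ((n : ℚ) + 1)) := by
      ring
    rw [this, hkey, pow_succ]
    ring
  rw [hrhs]
  linarith
end

section
/- Let q be a nonzero rational with q ≠ -1. Combining the symmetry G̃_{n,q⁻¹}(1-x) = (-1)^{n+1} G̃_{n,q}(x) with the value at x = -1, one has for every n > 1: (-1)ⁿ·G̃_{n+1,q}(-1) = G̃_{n+1,q⁻¹}(2) = (n+1)(1+q) + q²·G̃_{n+1,q⁻¹}(0), where G̃_{n,q}(x) are the q-Genocchi polynomials with weight zero. -/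
open PowerSeries

/-- (-1)ⁿ·G̃_{n+1,q}(-1) = G̃_{n+1,q⁻¹}(2) = (n+1)(1+q) + q²·G̃_{n+1,q⁻¹}(0)
for n > 1. -/
theorem qGenocchi_reflection_at_two (q : ℚ) (hq1 : q ≠ -1) (hq0 : q ≠ 0)
    (G G' : ℕ → ℚ → ℚ)
    (hG : ∀ x : ℚ, (PowerSeries.mk fun n => G n x / n.factorial) *
        (PowerSeries.C (R := ℚ) q * PowerSeries.exp ℚ + 1) =
        PowerSeries.C (R := ℚ) (1 + q) * PowerSeries.X * PowerSeries.rescale x (PowerSeries.exp ℚ))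
    (hG' : ∀ x : ℚ, (PowerSeries.mk fun n => G' n x / n.factorial) *
        (PowerSeries.C (R := ℚ) q⁻¹ * PowerSeries.exp ℚ + 1) =
        PowerSeries.C (R := ℚ) (1 + q⁻¹) * PowerSeries.X * PowerSeries.rescale x (PowerSeries.exp ℚ)) :
    ∀ n : ℕ, 1 < n →
      (-1 : ℚ) ^ n * G (n + 1) (-1) = G' (n + 1) 2 ∧
      G' (n + 1) 2 = (n + 1 : ℚ) * (1 + q) + q ^ 2 * G' (n + 1) 0 := by
  have hqi : (q : ℚ)⁻¹ ≠ -1 := fun h => hq1 (by rw [← inv_inv q, h]; norm_num)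
  have hne : q⁻¹ + 1 ≠ 0 := fun h => hqi (by linarith)
  -- the unit U' = C q⁻¹ * exp + 1 is nonzero
  have hU'c : constantCoeff (R := ℚ) (C (R := ℚ) q⁻¹ * exp ℚ + 1) = q⁻¹ + 1 := by
    simp [constantCoeff_exp]
  have hU'ne : (C (R := ℚ) q⁻¹ * exp ℚ + 1) ≠ 0 := by
    intro h
    apply hne
    rw [← hU'c, h, map_zero]
  -- helper: coefficient of RHS
  have hcoeff : ∀ (a x : ℚ) (m : ℕ),
      coeff (R := ℚ) (m+1) (C (R := ℚ) a * X * rescale x (exp ℚ)) = a * (x^m / m.factorial) := by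
    intro a x m
    rw [mul_assoc, coeff_C_mul, coeff_succ_X_mul, coeff_rescale, coeff_exp]
    simp only [Algebra.algebraMap_self_apply]
    ring
  -- rescale of a constant
  have hrC : ∀ a r : ℚ, rescale a (C (R := ℚ) r) = C (R := ℚ) r := by
    intro a r
    ext m
    simp only [coeff_rescale, coeff_C]
    split_ifs with h
    · subst h; simp
    · simp
  -- shift identity : F'(x+1) = exp * F'(x)
  have hshift : ∀ x : ℚ, (PowerSeries.mk fun n => G' n (x+1) / n.factorial) =
      exp ℚ * (PowerSeries.mk fun n => G' n x / n.factorial) := by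
    intro x
    refine mul_right_cancel₀ hU'ne ?_
    rw [hG' (x+1), mul_assoc (exp ℚ), hG' x,
      ← exp_mul_exp_eq_exp_add x 1, rescale_one]
    simp only [RingHom.id_apply]
    ring
  -- recurrence identity as power series
  have hrec : ∀ x : ℚ, C (R := ℚ) q⁻¹ * (PowerSeries.mk fun n => G' n (x+1) / n.factorial)
      + (PowerSeries.mk fun n => G' n x / n.factorial)
      = C (R := ℚ) (1 + q⁻¹) * X * rescale x (exp ℚ) := by
    intro x
    rw [hshift x, ← hG' x]
    ring
  -- exp * rescale (-1) exp = 1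
  have hexp : exp ℚ * rescale (-1 : ℚ) (exp ℚ) = 1 := exp_mul_exp_neg_eq_one
  have hCq : C (R := ℚ) q⁻¹ * C (R := ℚ) q = 1 := by
    rw [← map_mul, inv_mul_cancel₀ hq0, map_one]
  -- factorization of U'
  have hUfac : C (R := ℚ) q⁻¹ * exp ℚ * (C (R := ℚ) q * rescale (-1 : ℚ) (exp ℚ) + 1)
      = C (R := ℚ) q⁻¹ * exp ℚ + 1 := by
    rw [show C (R := ℚ) q⁻¹ * exp ℚ * (C (R := ℚ) q * rescale (-1 : ℚ) (exp ℚ) + 1)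
      = (C (R := ℚ) q⁻¹ * C (R := ℚ) q) * (exp ℚ * rescale (-1 : ℚ) (exp ℚ)) + C (R := ℚ) q⁻¹ * exp ℚ by ring,
      hexp, hCq, mul_one]
    ring
  -- symmetry : F'(1-x) = - rescale(-1) F(x)
  have hsym : ∀ (x : ℚ) (n : ℕ), G' n (1 - x) = -((-1)^n * G n x) := by
    intro x n
    have hmain : (PowerSeries.mk fun n => G' n (1-x) / n.factorial)
        = - rescale (-1 : ℚ) (PowerSeries.mk fun n => G n x / n.factorial) := by
      refine mul_right_cancel₀ hU'ne ?_
      rw [hG' (1-x)]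
      have h1 := congrArg (rescale (-1 : ℚ)) (hG x)
      simp only [map_mul, map_add, map_one, hrC, rescale_neg_one_X, rescale_rescale] at h1
      -- h1 : rescale(-1) F(x) * (C q * rescale(-1) exp + 1) = C (1+q) * (-X) * rescale (x * -1) exp
      have h2 : (- rescale (-1 : ℚ) (PowerSeries.mk fun n => G n x / n.factorial))
          * (C (R := ℚ) q⁻¹ * exp ℚ + 1)
          = -(rescale (-1 : ℚ) (PowerSeries.mk fun n => G n x / n.factorial)
              * (C (R := ℚ) q * rescale (-1 : ℚ) (exp ℚ) + 1)) * (C (R := ℚ) q⁻¹ * exp ℚ) := by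
        rw [← hUfac]; ring
      rw [h2, h1]
      have h3 : rescale (x * -1) (exp ℚ) * exp ℚ = rescale (1 - x) (exp ℚ) := by
        rw [show (1 : ℚ) - x = x * -1 + 1 by ring, ← exp_mul_exp_eq_exp_add (x * -1) 1,
          rescale_one]
        simp only [RingHom.id_apply]
      have h4 : C (R := ℚ) (1 + q⁻¹) = (1 + C (R := ℚ) q) * C (R := ℚ) q⁻¹ := by
        rw [show (1 : ℚ⟦X⟧) + C (R := ℚ) q = C (R := ℚ) (1 + q) by rw [map_add, map_one], ← map_mul]
        congr 1
        field_simp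
        ring
      rw [h4, show -((1 + C (R := ℚ) q) * -X * rescale (x * -1) (exp ℚ)) * (C (R := ℚ) q⁻¹ * exp ℚ)
        = (1 + C (R := ℚ) q) * C (R := ℚ) q⁻¹ * X * (rescale (x * -1) (exp ℚ) * exp ℚ) by ring, h3]
    have hthis := congrArg (coeff (R := ℚ) n) hmain
    simp only [coeff_mk, map_neg, coeff_rescale] at hthis
    have hfn : (n.factorial : ℚ) ≠ 0 := by
      exact_mod_cast n.factorial_ne_zero
    have h8 : G' n (1-x) / n.factorial * n.factorial
        = -((-1:ℚ)^n * (G n x / n.factorial)) * n.factorial := by rw [hthis]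
    rw [div_mul_cancel₀ _ hfn] at h8
    rw [h8]
    field_simp
  intro n hn
  have hf : ((n+1).factorial : ℚ) ≠ 0 := by
    exact_mod_cast (n+1).factorial_ne_zero
  have hfn : (n.factorial : ℚ) ≠ 0 := by
    exact_mod_cast n.factorial_ne_zero
  -- recurrence at x = 1
  have e1 := congrArg (coeff (R := ℚ) (n+1)) (hrec 1)
  rw [hcoeff] at e1
  simp only [map_add, coeff_C_mul, coeff_mk] at e1
  -- recurrence at x = 0
  have e0 := congrArg (coeff (R := ℚ) (n+1)) (hrec 0)
  rw [hcoeff] at e0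
  simp only [map_add, coeff_C_mul, coeff_mk] at e0
  rw [zero_pow (by omega : n ≠ 0)] at e0
  norm_num at e1 e0
  -- e1 : q⁻¹ * (G' (n+1) 2 / (n+1)!) + G' (n+1) 1 / (n+1)! = (1+q⁻¹) * (1/n!)
  -- e0 : q⁻¹ * (G' (n+1) 1 / (n+1)!) + G' (n+1) 0 / (n+1)! = 0
  have hfs : ((n+1).factorial : ℚ) = (n+1) * n.factorial := by
    rw [Nat.factorial_succ]
    push_cast
    ring
  constructor
  · have := hsym (-1) (n+1)
    norm_num at this
    rw [this]
    ring
  · rw [hfs] at e1 e0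
    field_simp at e1 e0
    have hfp : (0:ℚ) < n.factorial := by exact_mod_cast n.factorial_pos
    have hNp : (0:ℚ) < (n:ℚ) + 1 := by positivity
    have he1' : G' (n+1) 2 + q * G' (n+1) 1 = (q+1) * ((n:ℚ)+1) := by
      have hc : (q * (((n:ℚ)+1) * n.factorial) * n.factorial) ≠ 0 :=
        mul_ne_zero (mul_ne_zero hq0 (by positivity)) hfn
      apply mul_right_cancel₀ hc
      linear_combination (q * (((n:ℚ)+1) * n.factorial) * n.factorial) * e1
    have he0' : G' (n+1) 1 = -(q * G' (n+1) 0) := by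
      have hc : (((n:ℚ)+1) * (n.factorial:ℚ)) ≠ 0 := by positivity
      apply mul_right_cancel₀ hc
      linear_combination (((n:ℚ)+1) * (n.factorial:ℚ)) * e0
    linear_combination he1' - q * he0'
end
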